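/- Let k ≥ 3 and t ≥ 2 be integers and c > 0 a real number, and let λ₂ denote the second largest eigenvalue of the tridiagonal matrix T(k,t,c). Then every connected k-regular finite simple graph G whose second largest adjacency eigenvalue satisfies λ₂(G) ≤ λ₂ has at most M(k,t,c) = 1 + Σ_{i=0}^{t−3} k(k−1)^i + k(k−1)^{t−2}/c vertices. -/

import Mathlib

open Polynomial

/-- The adjacency matrix of a simple graph over `ℝ` is Hermitian. -/
theorem adjMatrix_isHermitian {V : Type*} [Fintype V] [DecidableEq V]
    (G : SimpleGraph V) [DecidableRel G.Adj] : (G.adjMatrix ℝ).IsHermitian := by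
  rw [Matrix.IsHermitian, Matrix.conjTranspose_eq_transpose_of_trivial]
  exact G.isSymm_adjMatrix

/-- The multiset of adjacency eigenvalues (with multiplicity) of a finite simple graph. -/
noncomputable def eigMultiset {V : Type*} [Fintype V] [DecidableEq V]
    (G : SimpleGraph V) [DecidableRel G.Adj] : Multiset ℝ :=
  Multiset.map (adjMatrix_isHermitian G).eigenvalues Finset.univ.val

/-- The second largest adjacency eigenvalue (with multiplicity) of a finite simple graph:
the second-to-last entry of the nondecreasing sorted list of eigenvalues. -/
noncomputable def secondEigenvalue {V : Type*} [Fintype V] [DecidableEq V]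
    (G : SimpleGraph V) [DecidableRel G.Adj] : ℝ :=
  ((eigMultiset G).sort (· ≤ ·)).getD (((eigMultiset G).sort (· ≤ ·)).length - 2) 0

/-- The largest adjacency eigenvalue (spectral radius) of a finite simple graph. -/
noncomputable def largestEigenvalue {V : Type*} [Fintype V] [DecidableEq V]
    (G : SimpleGraph V) [DecidableRel G.Adj] : ℝ :=
  ((eigMultiset G).sort (· ≤ ·)).getD (((eigMultiset G).sort (· ≤ ·)).length - 1) 0

/-- The orthogonal polynomials `F_i^{(k)}`. -/
noncomputable def Fpoly (k : ℕ) : ℕ → Polynomial ℝ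
  | 0 => 1
  | 1 => X
  | 2 => X ^ 2 - C (k : ℝ)
  | n + 3 => X * Fpoly k (n + 2) - C ((k : ℝ) - 1) * Fpoly k (n + 1)

/-- `G_i = Σ_{j=0}^i F_j`. -/
noncomputable def Gpoly (k : ℕ) (i : ℕ) : Polynomial ℝ :=
  ∑ j ∈ Finset.range (i + 1), Fpoly k j

/-- The tridiagonal matrix `T(k,t,c)`: superdiagonal `(k, k-1, …, k-1)`,
subdiagonal `(1, …, 1, c)`, diagonal chosen so that every row sums to `k`. -/
noncomputable def Tmat (k t : ℕ) (c : ℝ) : Matrix (Fin t) (Fin t) ℝ :=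
  Matrix.of fun i j =>
    if (j : ℕ) = (i : ℕ) + 1 then (if (i : ℕ) = 0 then (k : ℝ) else (k : ℝ) - 1)
    else if (i : ℕ) = (j : ℕ) + 1 then (if (i : ℕ) = t - 1 then c else 1)
    else if i = j then
      (k : ℝ) - (if (i : ℕ) + 1 < t then (if (i : ℕ) = 0 then (k : ℝ) else (k : ℝ) - 1) else 0)
        - (if 0 < (i : ℕ) then (if (i : ℕ) = t - 1 then c else 1) else 0)
    else 0

/-- `M(k,t,c) = 1 + Σ_{i=0}^{t-3} k (k-1)^i + k (k-1)^{t-2} / c`. -/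
noncomputable def Mbound (k t : ℕ) (c : ℝ) : ℝ :=
  1 + (∑ i ∈ Finset.range (t - 2), (k : ℝ) * ((k : ℝ) - 1) ^ i)
    + (k : ℝ) * ((k : ℝ) - 1) ^ (t - 2) / c


/-! ### Auxiliary development (CKNV linear-programming bound) -/

namespace CKNV

/-- `F_j(k)`: valencies at distance `j` in the `k`-regular tree. -/
noncomputable def mval (k : ℕ) : ℕ → ℝ
  | 0 => 1
  | j + 1 => (k : ℝ) * ((k : ℝ) - 1) ^ j

lemma Fpoly_eval_k (k : ℕ) : ∀ j, eval (k : ℝ) (Fpoly k j) = mval k j := by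
  intro j
  induction j using Nat.strong_induction_on with
  | _ j ih =>
    match j with
    | 0 => simp [Fpoly, mval]
    | 1 => simp [Fpoly, mval]
    | 2 => simp [Fpoly, mval]; ring
    | n + 3 =>
      have h2 := ih (n + 2) (by omega)
      have h1 := ih (n + 1) (by omega)
      simp only [Fpoly, eval_sub, eval_mul, eval_X, eval_C, h2, h1, mval]
      ring

lemma mval_pos {k : ℕ} (hk : 3 ≤ k) : ∀ j, 0 < mval k j := by
  intro j
  have hk1 : (3:ℝ) ≤ (k:ℝ) := by exact_mod_cast hk
  have h0 : (0:ℝ) < (k:ℝ) := by linarith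
  have h1 : (0:ℝ) < (k:ℝ) - 1 := by linarith
  cases j with
  | zero => norm_num [mval]
  | succ n => exact mul_pos h0 (pow_pos h1 n)

lemma mval_nonneg {k : ℕ} (hk : 3 ≤ k) (j : ℕ) : 0 ≤ mval k j := (mval_pos hk j).le

lemma Gpoly_succ (k i : ℕ) : Gpoly k (i + 1) = Gpoly k i + Fpoly k (i + 1) :=
  Finset.sum_range_succ _ _

lemma Gpoly_rec (k : ℕ) : ∀ n, Gpoly k (n + 2) = X * Gpoly k (n + 1) - C ((k:ℝ) - 1) * Gpoly k n := by
  intro n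
  induction n with
  | zero =>
    show Gpoly k 2 = _
    simp only [Gpoly, Finset.sum_range_succ, Finset.sum_range_zero, Fpoly, map_sub, map_one]
    ring
  | succ n ih =>
    have hF1 : Fpoly k (n+1) = Gpoly k (n+1) - Gpoly k n := by rw [Gpoly_succ k n]; ring
    have hF2 : Fpoly k (n+2) = Gpoly k (n+2) - Gpoly k (n+1) := by rw [Gpoly_succ k (n+1)]; ring
    calc Gpoly k (n+3) = Gpoly k (n+2) + Fpoly k (n+2+1) := Gpoly_succ k (n+2)
      _ = Gpoly k (n+2) + (X * Fpoly k (n+2) - C ((k:ℝ)-1) * Fpoly k (n+1)) := rfl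
      _ = X * Gpoly k (n+2) - C ((k:ℝ)-1) * Gpoly k (n+1) := by
          rw [hF2, hF1]; linear_combination ih

/-- The quasi-orthogonal chain `w`: `p = (c-1)G_{t-2} + G_{t-1}` equals `w_{t-1}`. -/
noncomputable def wseq (k : ℕ) (c : ℝ) : ℕ → Polynomial ℝ
  | 0 => 1
  | 1 => X + C c
  | 2 => X ^ 2 + C c * X + C (c - k)
  | n + 3 => X * wseq k c (n + 2) - C ((k : ℝ) - 1) * wseq k c (n + 1)

lemma wG (k : ℕ) (c : ℝ) : ∀ m, C (c - 1) * Gpoly k m + Gpoly k (m + 1) = wseq k c (m + 1) := by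
  intro m
  induction m using Nat.strong_induction_on with
  | _ m ih =>
    match m with
    | 0 =>
      show C (c-1) * Gpoly k 0 + Gpoly k 1 = X + C c
      simp only [Gpoly, Finset.sum_range_succ, Finset.sum_range_zero, Fpoly, map_sub, map_one]
      ring
    | 1 =>
      show C (c-1) * Gpoly k 1 + Gpoly k 2 = X ^ 2 + C c * X + C (c - k)
      simp only [Gpoly, Finset.sum_range_succ, Finset.sum_range_zero, Fpoly, map_sub, map_one,
        map_natCast]
      ring
    | n + 2 =>
      have i1 := ih (n+1) (by omega)
      have i0 := ih n (by omega)
      calc C (c-1) * Gpoly k (n+2) + Gpoly k (n+3)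
          = C (c-1) * (X * Gpoly k (n+1) - C ((k:ℝ)-1) * Gpoly k n)
            + (X * Gpoly k (n+2) - C ((k:ℝ)-1) * Gpoly k (n+1)) := by
            rw [← Gpoly_rec k n, ← Gpoly_rec k (n+1)]
        _ = X * (C (c-1) * Gpoly k (n+1) + Gpoly k (n+2))
            - C ((k:ℝ)-1) * (C (c-1) * Gpoly k n + Gpoly k (n+1)) := by ring
        _ = X * wseq k c (n+2) - C ((k:ℝ)-1) * wseq k c (n+1) := by rw [i1, i0]
        _ = wseq k c (n+3) := rfl

lemma wseq_monic (k : ℕ) (c : ℝ) : ∀ m, (wseq k c m).Monic ∧ (wseq k c m).natDegree = m := by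
  intro m
  induction m using Nat.strong_induction_on with
  | _ m ih =>
    match m with
    | 0 => constructor <;> simp [wseq, monic_one]
    | 1 => constructor
           · simpa [wseq] using monic_X_add_C c
           · simp [wseq]
    | 2 => constructor
           · unfold wseq
             monicity!
           · unfold wseq
             compute_degree!
    | n + 3 =>
      obtain ⟨hm2, hd2⟩ := ih (n+2) (by omega)
      obtain ⟨hm1, hd1⟩ := ih (n+1) (by omega)
      have hmX : (X * wseq k c (n+2)).Monic := monic_X.mul hm2
      have hdX : (X * wseq k c (n+2)).natDegree = n + 3 := by
        rw [natDegree_mul (X_ne_zero) hm2.ne_zero, natDegree_X, hd2]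
        omega
      have hdeg1 : (wseq k c (n+1)).degree = ((n+1 : ℕ) : WithBot ℕ) := by
        rw [degree_eq_natDegree hm1.ne_zero, hd1]
      have hlt : ((C ((k:ℝ)-1)) * wseq k c (n+1)).degree < (X * wseq k c (n+2)).degree := by
        apply lt_of_le_of_lt (degree_mul_le _ _)
        rw [degree_eq_natDegree hmX.ne_zero, hdX, hdeg1]
        apply lt_of_le_of_lt (add_le_add degree_C_le le_rfl)
        rw [zero_add]
        exact_mod_cast Nat.cast_lt (α := WithBot ℕ) |>.mpr (by omega)
      constructor
      · exact hmX.sub_of_left hlt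
      · show (X * wseq k c (n+2) - C ((k:ℝ)-1) * wseq k c (n+1)).natDegree = n + 3
        rw [← hdX]
        apply natDegree_sub_eq_left_of_natDegree_lt
        rw [hdX]
        apply lt_of_le_of_lt (natDegree_mul_le)
        simp only [natDegree_C, hd1, zero_add]
        omega

lemma exists_max_root (h : Polynomial ℝ) (hm : h.Monic) (hdeg : 0 < h.natDegree) (x0 : ℝ)
    (hx0 : h.eval x0 ≤ 0) : ∃ z, x0 ≤ z ∧ h.eval z = 0 ∧ ∀ x, z < x → 0 < h.eval x := by
  have hne : h ≠ 0 := hm.ne_zero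
  have htt : Filter.Tendsto (fun x => h.eval x) Filter.atTop Filter.atTop := by
    apply Polynomial.tendsto_atTop_of_leadingCoeff_nonneg
    · exact natDegree_pos_iff_degree_pos.mp hdeg
    · rw [hm.leadingCoeff]; norm_num
  obtain ⟨B, hB⟩ := Filter.eventually_atTop.mp (htt.eventually_ge_atTop 1)
  have hroot0 : ∃ y, x0 ≤ y ∧ h.IsRoot y := by
    set B' := max B x0 with hB'
    have h1 : (1:ℝ) ≤ h.eval B' := hB B' (le_max_left _ _)
    have hmem : (0:ℝ) ∈ Set.Icc (h.eval x0) (h.eval B') := ⟨hx0, by linarith⟩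
    have hIcc := intermediate_value_Icc (le_max_right B x0)
      (h.continuous_aeval.continuousOn (s := Set.Icc x0 B'))
    obtain ⟨y, hy, hy0⟩ := hIcc hmem
    exact ⟨y, hy.1, hy0⟩
  classical
  set T : Finset ℝ := h.roots.toFinset.filter (fun y => x0 ≤ y) with hT
  have hTne : T.Nonempty := by
    obtain ⟨y, hy1, hy2⟩ := hroot0
    refine ⟨y, by simp [hT, Multiset.mem_toFinset, mem_roots hne, hy1]; exact hy2⟩
  set z := T.max' hTne with hz
  have hzT : z ∈ T := T.max'_mem hTne
  have hzroot : h.IsRoot z := by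
    have := Finset.mem_filter.mp hzT
    simpa [Multiset.mem_toFinset, mem_roots hne] using this.1
  have hzx0 : x0 ≤ z := (Finset.mem_filter.mp hzT).2
  refine ⟨z, hzx0, hzroot, ?_⟩
  intro x hx
  have hxnotroot : ¬ h.IsRoot x := by
    intro hroot
    have hxT : x ∈ T := by
      simp only [hT, Finset.mem_filter, Multiset.mem_toFinset, mem_roots hne]
      exact ⟨hroot, le_trans hzx0 hx.le⟩
    exact absurd (T.le_max' x hxT) (not_le.mpr (hz ▸ hx))
  rcases lt_trichotomy 0 (h.eval x) with hpos | heq | hneg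
  · exact hpos
  · exact absurd heq.symm hxnotroot
  · exfalso
    set B2 := max B (x + 1) with hB2
    have h1 : (1:ℝ) ≤ h.eval B2 := hB B2 (le_max_left _ _)
    have hxB2 : x ≤ B2 := le_trans (by linarith) (le_max_right B (x+1))
    have hmem : (0:ℝ) ∈ Set.Icc (h.eval x) (h.eval B2) := ⟨hneg.le, by linarith⟩
    obtain ⟨y, hy, hy0⟩ := intermediate_value_Icc hxB2 (h.continuous_aeval.continuousOn) hmem
    have hyT : y ∈ T := by
      simp only [hT, Finset.mem_filter, Multiset.mem_toFinset, mem_roots hne]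
      exact ⟨hy0, le_trans hzx0 (le_trans hx.le hy.1)⟩
    have h4 : y ≤ z := T.le_max' y hyT
    have h5 : z < y := lt_of_lt_of_le hx hy.1
    linarith

def Qprop (k : ℕ) (c : ℝ) (m : ℕ) (z : ℝ) : Prop :=
  (wseq k c m).eval z = 0 ∧ ∀ x, z < x → 0 < (wseq k c m).eval x

lemma Qprop_unique {k : ℕ} {c : ℝ} {m : ℕ} {y z : ℝ} (hy : Qprop k c m y) (hz : Qprop k c m z) :
    y = z := by
  by_contra hne
  rcases lt_or_gt_of_ne hne with h | h
  · exact absurd (hz.1) (ne_of_gt (hy.2 z h))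
  · exact absurd (hy.1) (ne_of_gt (hz.2 y h))

lemma bigchain {k : ℕ} {c : ℝ} (hk : 3 ≤ k) (hc : 0 < c) :
    ∀ m, 1 ≤ m → ∃ z, Qprop k c m z ∧ ∀ y, Qprop k c (m - 1) y → y < z := by
  intro m
  induction m using Nat.strong_induction_on with
  | _ m ih =>
    match m with
    | 0 => intro h; omega
    | 1 =>
      intro _
      refine ⟨-c, ⟨by simp [wseq], fun x hx => by simp [wseq]; linarith⟩, fun y hy => ?_⟩
      exfalso
      have := hy.1
      simp [wseq] at this
    | 2 =>
      intro _
      have hk3 : (3:ℝ) ≤ (k:ℝ) := by exact_mod_cast hk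
      set D : ℝ := c^2 - 4*c + 4*k with hD
      have hDpos : 0 < D := by nlinarith [sq_nonneg (c - 2)]
      set s : ℝ := Real.sqrt D with hs
      have hs2 : s^2 = D := Real.sq_sqrt hDpos.le
      have hspos : 0 < s := Real.sqrt_pos.mpr hDpos
      set x0 : ℝ := (-c + s) / 2 with hx0
      have hx0eval : (wseq k c 2).eval x0 = 0 := by
        simp only [wseq, eval_add, eval_mul, eval_pow, eval_X, eval_C]
        rw [hx0]
        field_simp
        nlinarith [hs2]
      obtain ⟨z, hzx0, hzroot, hzpos⟩ :=
        exists_max_root (wseq k c 2) (wseq_monic k c 2).1 (by rw [(wseq_monic k c 2).2]; omega)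
          x0 (le_of_eq hx0eval)
      refine ⟨z, ⟨hzroot, hzpos⟩, fun y hy => ?_⟩
      have hy1 : y = -c := by
        have := hy.1
        simp [wseq] at this
        linarith
      have hlt : -c < x0 := by
        rw [hx0]
        linarith
      linarith
    | n + 3 =>
      intro _
      obtain ⟨z2, hQ2, hch2⟩ := ih (n + 2) (by omega) (by omega)
      obtain ⟨z1, hQ1, _⟩ := ih (n + 1) (by omega) (by omega)
      have hz12 : z1 < z2 := hch2 z1 (by simpa using hQ1)
      have hweval : (wseq k c (n + 3)).eval z2 < 0 := by
        have hrec : wseq k c (n+3) = X * wseq k c (n+2) - C ((k:ℝ)-1) * wseq k c (n+1) := rfl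
        rw [hrec]
        simp only [eval_sub, eval_mul, eval_X, eval_C, hQ2.1, mul_zero]
        have h1 : 0 < (wseq k c (n+1)).eval z2 := hQ1.2 z2 hz12
        have hk3 : (3:ℝ) ≤ (k:ℝ) := by exact_mod_cast hk
        nlinarith
      obtain ⟨z, hzx0, hzroot, hzpos⟩ :=
        exists_max_root (wseq k c (n+3)) (wseq_monic k c (n+3)).1
          (by rw [(wseq_monic k c (n+3)).2]; omega) z2 hweval.le
      refine ⟨z, ⟨hzroot, hzpos⟩, fun y hy => ?_⟩
      have hyz2 : y = z2 := Qprop_unique hy (by simpa using hQ2)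
      have hzne : z2 < z := lt_of_le_of_ne hzx0 (by
        intro hEq
        rw [← hEq] at hzroot
        exact absurd hzroot (ne_of_lt hweval))
      rw [hyz2]; exact hzne

lemma qchain_mono {k : ℕ} {c : ℝ} (hk : 3 ≤ k) (hc : 0 < c) :
    ∀ d m, 1 ≤ m → ∀ y z, Qprop k c m y → Qprop k c (m + d + 1) z → y < z := by
  intro d
  induction d with
  | zero =>
    intro m hm y z hy hz
    obtain ⟨z', hQ', hch⟩ := bigchain hk hc (m + 1) (by omega)
    have hzz : z = z' := Qprop_unique hz (by simpa using hQ')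
    rw [hzz]
    exact hch y (by simpa using hy)
  | succ d ihd =>
    intro m hm y z hy hz
    obtain ⟨w, hQw, _⟩ := bigchain hk hc (m + d + 1) (by omega)
    have h1 : y < w := ihd m hm y w hy hQw
    obtain ⟨z', hQ', hch⟩ := bigchain hk hc (m + d + 2) (by omega)
    have hz' : Qprop k c (m + d + 2) z := by
      have : m + (d+1) + 1 = m + d + 2 := by omega
      rwa [this] at hz
    have hzz : z = z' := Qprop_unique hz' (by simpa using hQ')
    have h2 : w < z' := hch w (by simpa using hQw)
    rw [hzz]; linarith

lemma wpos_at_root {k : ℕ} {c : ℝ} (hk : 3 ≤ k) (hc : 0 < c) {s : ℕ} {θ : ℝ}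
    (hroot : (wseq k c (s+1)).eval θ = 0)
    (hmax : ∀ x, (wseq k c (s+1)).eval x = 0 → x ≤ θ) :
    ∀ m, 1 ≤ m → m ≤ s → 0 < (wseq k c m).eval θ := by
  obtain ⟨z, hQz, _⟩ := bigchain hk hc (s+1) (by omega)
  have hθz : θ = z := by
    rcases lt_trichotomy θ z with h | h | h
    · exact absurd (hmax z hQz.1) (not_le.mpr h)
    · exact h
    · exact absurd hroot (ne_of_gt (hQz.2 θ h))
  intro m hm1 hms
  obtain ⟨y, hQy, _⟩ := bigchain hk hc m hm1
  have hyz : y < z := by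
    have := qchain_mono hk hc (s - m) m hm1 y z hQy (by
      have he : m + (s - m) + 1 = s + 1 := by omega
      rwa [he])
    exact this
  exact hQy.2 θ (by rw [hθz]; exact hyz)

noncomputable def useq (k : ℕ) (c θ : ℝ) : ℕ → ℝ
  | 0 => 1
  | 1 => θ + c
  | m + 2 => (wseq k c (m+2)).eval θ + useq k c θ m

noncomputable def Rpoly (k : ℕ) (c θ : ℝ) (m : ℕ) : Polynomial ℝ :=
  ∑ j ∈ Finset.range (m+1), C (useq k c θ (m - j)) * Fpoly k j

noncomputable def gterm (k : ℕ) : ℕ → Polynomial ℝ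
  | 0 => 0
  | 1 => C (k : ℝ)
  | j + 2 => C ((k:ℝ) - 1) * Fpoly k (j+1)

lemma hXF (k : ℕ) : ∀ j, X * Fpoly k j = Fpoly k (j+1) + gterm k j := by
  intro j
  match j with
  | 0 => simp [Fpoly, gterm]
  | 1 => show X * X = (X^2 - C (k:ℝ)) + C (k:ℝ); ring
  | j + 2 =>
    show X * Fpoly k (j+2) = (X * Fpoly k (j + 2) - C ((k : ℝ) - 1) * Fpoly k (j + 1)) + _
    simp [gterm]

lemma Rrec (k : ℕ) (c θ : ℝ) (m : ℕ) :
    Rpoly k c θ (m+2) = X * Rpoly k c θ (m+1) - C ((k:ℝ)-1) * Rpoly k c θ m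
      + C ((wseq k c (m+2)).eval θ) := by
  unfold Rpoly
  rw [Finset.mul_sum]
  have e1 : ∀ j ∈ Finset.range (m+2), X * (C (useq k c θ (m+1-j)) * Fpoly k j)
      = C (useq k c θ (m+1-j)) * Fpoly k (j+1) + C (useq k c θ (m+1-j)) * gterm k j := by
    intro j _
    rw [mul_left_comm, hXF, mul_add]
  rw [Finset.sum_congr rfl e1, Finset.sum_add_distrib]
  have e2 : ∑ j ∈ Finset.range (m+2), C (useq k c θ (m+1-j)) * gterm k j
      = C (useq k c θ m) * C (k:ℝ)
        + ∑ j ∈ Finset.range m, C ((k:ℝ)-1) * (C (useq k c θ (m-(j+1))) * Fpoly k (j+1)) := by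
    rw [Finset.sum_range_succ', Finset.sum_range_succ']
    simp only [gterm, Nat.succ_sub_succ, mul_zero, add_zero, Nat.sub_zero, Nat.sub_self]
    rw [add_comm]
    congr 1
    · apply Finset.sum_congr rfl
      intro j _
      ring
  have e3 : C ((k:ℝ)-1) * ∑ j ∈ Finset.range (m+1), C (useq k c θ (m - j)) * Fpoly k j
      = C ((k:ℝ)-1) * C (useq k c θ m)
        + ∑ j ∈ Finset.range m, C ((k:ℝ)-1) * (C (useq k c θ (m-(j+1))) * Fpoly k (j+1)) := by
    rw [Finset.mul_sum, Finset.sum_range_succ']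
    simp only [Nat.sub_zero]
    rw [add_comm]
    congr 1
    simp [Fpoly]
  rw [e2, e3]
  rw [Finset.sum_range_succ' _ (m+2)]
  simp only [Nat.succ_sub_succ, Nat.sub_zero]
  have hu : useq k c θ (m+2) = (wseq k c (m+2)).eval θ + useq k c θ m := rfl
  rw [hu]
  simp only [map_add, map_sub, map_one, Fpoly]
  ring

lemma Rdiv (k : ℕ) (c θ : ℝ) : ∀ m, (X - C θ) * Rpoly k c θ m
    = wseq k c (m+1) - C ((wseq k c (m+1)).eval θ) := by
  intro m
  induction m using Nat.strong_induction_on with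
  | _ m ih =>
    match m with
    | 0 =>
      show (X - C θ) * Rpoly k c θ 0 = (X + C c) - C ((X + C c).eval θ)
      unfold Rpoly
      simp [useq, Fpoly]
    | 1 =>
      show (X - C θ) * Rpoly k c θ 1 = wseq k c 2 - C ((wseq k c 2).eval θ)
      unfold Rpoly
      simp only [Finset.sum_range_succ, Finset.sum_range_zero, useq, Fpoly, wseq,
        eval_add, eval_sub, eval_mul, eval_pow, eval_X, eval_C, map_add, map_sub, map_mul,
        map_pow, map_one]
      simp only [show useq k c θ 0 = 1 from rfl, show useq k c θ 1 = θ + c from rfl, map_add,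
        map_one]
      ring
    | m + 2 =>
      have i1 := ih (m+1) (by omega)
      have i2 := ih m (by omega)
      have heval : (wseq k c (m+3)).eval θ
          = θ * (wseq k c (m+2)).eval θ - ((k:ℝ)-1) * (wseq k c (m+1)).eval θ := by
        show (X * wseq k c (m + 2) - C ((k : ℝ) - 1) * wseq k c (m + 1)).eval θ = _
        simp [eval_mul, eval_sub]
      calc (X - C θ) * Rpoly k c θ (m+2)
          = X * ((X - C θ) * Rpoly k c θ (m+1)) - C ((k:ℝ)-1) * ((X - C θ) * Rpoly k c θ m)
            + (X - C θ) * C ((wseq k c (m+2)).eval θ) := by rw [Rrec]; ring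
        _ = X * (wseq k c (m+2) - C ((wseq k c (m+2)).eval θ))
            - C ((k:ℝ)-1) * (wseq k c (m+1) - C ((wseq k c (m+1)).eval θ))
            + (X - C θ) * C ((wseq k c (m+2)).eval θ) := by rw [i1, i2]
        _ = (X * wseq k c (m+2) - C ((k:ℝ)-1) * wseq k c (m+1))
            - C (θ * (wseq k c (m+2)).eval θ - ((k:ℝ)-1) * (wseq k c (m+1)).eval θ) := by
            simp only [map_sub, map_mul, map_one]
            ring
        _ = wseq k c (m+3) - C ((wseq k c (m+3)).eval θ) := by rw [heval]; rfl

end CKNV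

section Walks
variable {V : Type*} [Fintype V] [DecidableEq V] (G : SimpleGraph V) [DecidableRel G.Adj]

/-- number of non-backtracking walks of length `j` from `u` to `v` whose second vertex is `x` -/
def Pfun : ℕ → V → V → V → ℕ
  | 0, _, _, _ => 0
  | 1, u, x, v => if x = v ∧ G.Adj u v then 1 else 0
  | (j+2), u, x, v =>
      if G.Adj u x then ∑ y ∈ (G.neighborFinset x).erase u, Pfun (j+1) x y v else 0

/-- matrix counting non-backtracking walks of length `j` -/
def Nmat : ℕ → Matrix V V ℕ
  | 0 => 1
  | (j+1) => Matrix.of fun u v => ∑ x, Pfun G (j+1) u x v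

lemma mem_nb (a b : V) : a ∈ G.neighborFinset b ↔ G.Adj b a := by
  rw [SimpleGraph.mem_neighborFinset]

lemma Pfun_eq_zero_of_not_adj : ∀ (j : ℕ) (u x v : V), ¬ G.Adj u x → Pfun G (j+1) u x v = 0 := by
  intro j u x v h
  match j with
  | 0 =>
    simp only [Pfun, ite_eq_right_iff, and_imp]
    intro hx hadj
    exact absurd (hx ▸ hadj) h
  | j + 1 =>
    simp only [Pfun, if_neg h]

lemma Pfun_restrict (j : ℕ) (u v : V) :
    ∑ x, Pfun G (j+1) u x v = ∑ x ∈ G.neighborFinset u, Pfun G (j+1) u x v := by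
  symm
  apply Finset.sum_subset (Finset.subset_univ _)
  intro x _ hx
  rw [SimpleGraph.mem_neighborFinset] at hx
  exact Pfun_eq_zero_of_not_adj G j u x v hx

omit [Fintype V] in
lemma double_count (s : Finset V) (g : V → ℕ) :
    (∑ x ∈ s, ∑ y ∈ s.erase x, g y) + ∑ y ∈ s, g y = s.card * ∑ y ∈ s, g y := by
  have h1 : ∀ x ∈ s, ∑ y ∈ s.erase x, g y = (∑ y ∈ s, g y) - g x := by
    intro x hx
    have := Finset.sum_erase_add s g hx
    omega
  rw [Finset.sum_congr rfl h1]
  have h2 : ∑ x ∈ s, ((∑ y ∈ s, g y) - g x) = s.card * (∑ y ∈ s, g y) - ∑ x ∈ s, g x := by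
    rw [Finset.sum_tsub_distrib, Finset.sum_const, smul_eq_mul]
    intro x hx
    exact Finset.single_le_sum (fun i _ => Nat.zero_le (g i)) hx
  rw [h2]
  have h3 : ∑ x ∈ s, g x ≤ s.card * ∑ y ∈ s, g y := by
    cases Nat.eq_zero_or_pos s.card with
    | inl h => simp [Finset.card_eq_zero.mp h]
    | inr h => calc ∑ x ∈ s, g x = 1 * ∑ x ∈ s, g x := (one_mul _).symm
        _ ≤ s.card * ∑ y ∈ s, g y := Nat.mul_le_mul_right _ h
  omega

lemma Nmat_one (u v : V) : Nmat G 1 u v = if G.Adj u v then 1 else 0 := by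
  show (∑ x, Pfun G 1 u x v) = _
  simp [Pfun, ite_and, Finset.sum_ite_eq' Finset.univ v]

lemma key_rec (m : ℕ) (u v : V) :
    (∑ x ∈ G.neighborFinset u, Nmat G (m+2) x v) + Nmat G (m+1) u v
      = Nmat G (m+3) u v + (G.degree u) * Nmat G (m+1) u v := by
  have expand : ∀ x ∈ G.neighborFinset u, Nmat G (m+2) x v
      = (∑ y ∈ Finset.univ.erase u, Pfun G (m+2) x y v) + Pfun G (m+2) x u v := by
    intro x _
    show (∑ y, Pfun G (m+2) x y v) = _
    rw [← Finset.sum_erase_add Finset.univ _ (Finset.mem_univ u)]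
  rw [Finset.sum_congr rfl expand, Finset.sum_add_distrib]
  have partA : ∑ x ∈ G.neighborFinset u, ∑ y ∈ Finset.univ.erase u, Pfun G (m+2) x y v
      = Nmat G (m+3) u v := by
    have inner : ∀ x ∈ G.neighborFinset u,
        ∑ y ∈ Finset.univ.erase u, Pfun G (m+2) x y v
          = ∑ y ∈ (G.neighborFinset x).erase u, Pfun G (m+2) x y v := by
      intro x _
      symm
      apply Finset.sum_subset
      · exact Finset.erase_subset_erase u (Finset.subset_univ _)
      · intro y hy1 hy2
        by_cases hadj : G.Adj x y
        · exact absurd (Finset.mem_erase.mpr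
            ⟨(Finset.mem_erase.mp hy1).1, (mem_nb G y x).mpr hadj⟩) hy2
        · exact Pfun_eq_zero_of_not_adj G (m+1) x y v hadj
    rw [Finset.sum_congr rfl inner]
    show _ = ∑ x, Pfun G (m+3) u x v
    rw [Pfun_restrict]
    apply Finset.sum_congr rfl
    intro x hx
    have hadj : G.Adj u x := (mem_nb G x u).mp hx
    show _ = Pfun G (m+1+2) u x v
    simp only [Pfun, if_pos hadj]
  have partB : (∑ x ∈ G.neighborFinset u, Pfun G (m+2) x u v) + Nmat G (m+1) u v
      = (G.degree u) * Nmat G (m+1) u v := by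
    have expandB : ∀ x ∈ G.neighborFinset u, Pfun G (m+2) x u v
        = ∑ y ∈ (G.neighborFinset u).erase x, Pfun G (m+1) u y v := by
      intro x hx
      have hadj : G.Adj x u := ((mem_nb G x u).mp hx).symm
      show Pfun G (m+2) x u v = _
      match m with
      | 0 => simp only [Pfun, if_pos hadj]
      | m'+1 => simp only [Pfun, if_pos hadj]
    rw [Finset.sum_congr rfl expandB]
    have hN : Nmat G (m+1) u v = ∑ y ∈ G.neighborFinset u, Pfun G (m+1) u y v := by
      show (∑ x, Pfun G (m+1) u x v) = _
      exact Pfun_restrict G m u v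
    rw [hN]
    rw [double_count]
    rfl
  rw [partA]
  omega

lemma key_base (u v : V) :
    (∑ x ∈ G.neighborFinset u, Nmat G 1 x v)
      = Nmat G 2 u v + (G.degree u) * Nmat G 0 u v := by
  have lhs : ∀ x ∈ G.neighborFinset u, Nmat G 1 x v = if G.Adj x v then 1 else 0 :=
    fun x _ => Nmat_one G x v
  rw [Finset.sum_congr rfl lhs]
  have rhs : Nmat G 2 u v
      = ∑ x ∈ G.neighborFinset u, if v ∈ (G.neighborFinset x).erase u then 1 else 0 := by
    show (∑ x, Pfun G 2 u x v) = _
    rw [Pfun_restrict]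
    apply Finset.sum_congr rfl
    intro x hx
    have hadj : G.Adj u x := (mem_nb G x u).mp hx
    show Pfun G 2 u x v = _
    simp only [Pfun, if_pos hadj, ite_and]
    rw [Finset.sum_ite_eq' ((G.neighborFinset x).erase u) v
      (fun _ => if G.Adj x v then 1 else 0)]
    by_cases hv : v ∈ (G.neighborFinset x).erase u
    · rw [if_pos hv, if_pos hv, if_pos ((mem_nb G v x).mp (Finset.mem_erase.mp hv).2)]
    · rw [if_neg hv, if_neg hv]
  rw [rhs]
  have hN0 : Nmat G 0 u v = if u = v then 1 else 0 := Matrix.one_apply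
  rw [hN0]
  by_cases huv : u = v
  · have e1 : ∀ x ∈ G.neighborFinset u,
        (if v ∈ (G.neighborFinset x).erase u then (1:ℕ) else 0) = 0 := by
      intro x _
      rw [if_neg]
      intro hv
      exact (Finset.mem_erase.mp hv).1 huv.symm
    have e2 : ∀ x ∈ G.neighborFinset u, (if G.Adj x v then (1:ℕ) else 0) = 1 := by
      intro x hx
      rw [if_pos (huv ▸ ((mem_nb G x u).mp hx).symm)]
    rw [Finset.sum_congr rfl e1, Finset.sum_congr rfl e2, if_pos huv]
    rw [Finset.sum_const, Finset.sum_const, smul_eq_mul, smul_eq_mul, mul_one, mul_zero,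
      zero_add, mul_one]
    rfl
  · have e1 : ∀ x ∈ G.neighborFinset u, (if v ∈ (G.neighborFinset x).erase u then (1:ℕ) else 0)
        = (if G.Adj x v then 1 else 0) := by
      intro x _
      by_cases hadj : G.Adj x v
      · rw [if_pos hadj, if_pos (Finset.mem_erase.mpr ⟨fun h => huv h.symm, (mem_nb G v x).mpr hadj⟩)]
      · rw [if_neg hadj, if_neg (fun hv => hadj ((mem_nb G v x).mp (Finset.mem_erase.mp hv).2))]
    rw [Finset.sum_congr rfl e1, if_neg huv]
    omega

/-- The fundamental bridge: `F_j(A)` is the (cast) non-backtracking walk count matrix. -/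
lemma Ecast {k : ℕ} (hreg : G.IsRegularOfDegree k) :
    ∀ j, Polynomial.aeval (G.adjMatrix ℝ) (Fpoly k j)
      = (Nmat G j).map (Nat.cast : ℕ → ℝ) := by
  intro j
  induction j using Nat.strong_induction_on with
  | _ j ih =>
    match j with
    | 0 =>
      rw [show Fpoly k 0 = 1 from rfl, map_one]
      ext u v
      rw [Matrix.map_apply, show Nmat G 0 = 1 from rfl, Matrix.one_apply, Matrix.one_apply]
      by_cases h : u = v <;> simp [h]
    | 1 =>
      rw [show Fpoly k 1 = (X : Polynomial ℝ) from rfl, aeval_X]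
      ext u v
      rw [Matrix.map_apply, Nmat_one, SimpleGraph.adjMatrix_apply]
      by_cases h : G.Adj u v <;> simp [h]
    | 2 =>
      have e : Polynomial.aeval (G.adjMatrix ℝ) (Fpoly k 2)
          = G.adjMatrix ℝ * G.adjMatrix ℝ - (k : ℝ) • (1 : Matrix V V ℝ) := by
        show Polynomial.aeval (G.adjMatrix ℝ) (X^2 - C (k:ℝ)) = _
        rw [map_sub, map_pow, aeval_X, aeval_C, Algebra.algebraMap_eq_smul_one, pow_two]
      rw [e]
      ext u v
      have hcast := congrArg (Nat.cast : ℕ → ℝ) (key_base G u v)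
      push_cast at hcast
      have h1 : ∀ x ∈ G.neighborFinset u, ((Nmat G 1 x v : ℕ) : ℝ)
          = G.adjMatrix ℝ x v := by
        intro x _
        rw [Nmat_one]
        by_cases h : G.Adj x v <;> simp [h]
      rw [Finset.sum_congr rfl h1] at hcast
      rw [hreg u] at hcast
      have h0 : ((Nmat G 0 u v : ℕ) : ℝ) = (1 : Matrix V V ℝ) u v := by
        have he : Nmat G 0 u v = if u = v then 1 else 0 := Matrix.one_apply
        rw [he, Matrix.one_apply]
        by_cases h : u = v <;> simp [h]
      have h2 : (G.adjMatrix ℝ * G.adjMatrix ℝ) u v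
          = ∑ x ∈ G.neighborFinset u, G.adjMatrix ℝ x v := by
        rw [SimpleGraph.adjMatrix_mul_apply]
      simp only [Matrix.sub_apply, Matrix.smul_apply, Matrix.map_apply, smul_eq_mul]
      rw [h2, hcast, ← h0]
      ring
    | m + 3 =>
      have i2 := ih (m+2) (by omega)
      have i1 := ih (m+1) (by omega)
      have e : Polynomial.aeval (G.adjMatrix ℝ) (Fpoly k (m+3))
          = G.adjMatrix ℝ * Polynomial.aeval (G.adjMatrix ℝ) (Fpoly k (m+2))
            - ((k : ℝ) - 1) • Polynomial.aeval (G.adjMatrix ℝ) (Fpoly k (m+1)) := by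
        show Polynomial.aeval (G.adjMatrix ℝ)
          (X * Fpoly k (m+2) - C ((k:ℝ)-1) * Fpoly k (m+1)) = _
        rw [map_sub, map_mul, map_mul, aeval_X, aeval_C, Algebra.algebraMap_eq_smul_one,
          Algebra.smul_mul_assoc, one_mul]
      rw [e, i1, i2]
      ext u v
      have hcast := congrArg (Nat.cast : ℕ → ℝ) (key_rec G m u v)
      push_cast at hcast
      rw [hreg u] at hcast
      simp only [Matrix.sub_apply, Matrix.smul_apply, Matrix.map_apply, smul_eq_mul]
      rw [SimpleGraph.adjMatrix_mul_apply]
      have h1 : ∑ x ∈ G.neighborFinset u, ((Nmat G (m+2)).map (Nat.cast : ℕ → ℝ)) x v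
          = ∑ x ∈ G.neighborFinset u, ((Nmat G (m+2) x v : ℕ) : ℝ) := rfl
      rw [h1]
      linarith [hcast]
end Walks

section MatrixUtil
open Matrix
variable {V : Type*} [Fintype V] [DecidableEq V]

lemma aeval_transpose (A : Matrix V V ℝ) (hA : Aᵀ = A) (q : Polynomial ℝ) :
    (Polynomial.aeval A q)ᵀ = Polynomial.aeval A q := by
  induction q using Polynomial.induction_on' with
  | add p q hp hq => rw [map_add, Matrix.transpose_add, hp, hq]
  | monomial n a =>
    rw [Polynomial.aeval_monomial, Algebra.algebraMap_eq_smul_one, Algebra.smul_mul_assoc,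
      one_mul, Matrix.transpose_smul, Matrix.transpose_pow, hA]

lemma conj_aeval (U M : Matrix V V ℝ) (h1 : U * star U = 1) (h2 : star U * U = 1)
    (q : Polynomial ℝ) :
    Polynomial.aeval (U * M * star U) q = U * Polynomial.aeval M q * star U := by
  have hpow : ∀ n : ℕ, (U * M * star U) ^ n = U * M ^ n * star U := by
    intro n
    induction n with
    | zero => simp [h1]
    | succ n ih =>
      rw [pow_succ, ih, pow_succ]
      calc U * M ^ n * star U * (U * M * star U)
          = U * M ^ n * (star U * U) * M * star U := by noncomm_ring
        _ = U * (M ^ n * M) * star U := by rw [h2]; noncomm_ring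
  induction q using Polynomial.induction_on' with
  | add p q hp hq => rw [map_add, map_add, hp, hq]; noncomm_ring
  | monomial n a =>
    rw [Polynomial.aeval_monomial, Polynomial.aeval_monomial, hpow]
    simp [Algebra.algebraMap_eq_smul_one, Matrix.smul_mul, Matrix.mul_smul]

lemma aeval_diagonal (d : V → ℝ) (q : Polynomial ℝ) :
    Polynomial.aeval (Matrix.diagonal d) q = Matrix.diagonal (fun i => q.eval (d i)) := by
  induction q using Polynomial.induction_on' with
  | add p q hp hq =>
    rw [map_add, hp, hq]
    ext i j
    by_cases h : i = j <;> simp [Matrix.diagonal_apply, h, Polynomial.eval_add]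
  | monomial n a =>
    rw [Polynomial.aeval_monomial, Algebra.algebraMap_eq_smul_one, Algebra.smul_mul_assoc,
      one_mul, Matrix.diagonal_pow]
    ext i j
    by_cases h : i = j <;> simp [Matrix.diagonal_apply, h, Polynomial.eval_monomial]

end MatrixUtil

section Spectral
open Matrix
variable {V : Type*} [Fintype V] [DecidableEq V]

lemma trace_aeval (A : Matrix V V ℝ) (hA : A.IsHermitian) (q : Polynomial ℝ) :
    (Polynomial.aeval A q).trace = ∑ i, q.eval (hA.eigenvalues i) := by
  set U : Matrix V V ℝ := (hA.eigenvectorUnitary : Matrix V V ℝ) with hU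
  have h1 : U * star U = 1 := (Matrix.mem_unitaryGroup_iff).mp hA.eigenvectorUnitary.prop
  have h2 : star U * U = 1 := (Matrix.mem_unitaryGroup_iff').mp hA.eigenvectorUnitary.prop
  have hspec : A = U * Matrix.diagonal hA.eigenvalues * star U := by
    have := hA.spectral_theorem
    simpa [RCLike.ofReal_real_eq_id] using this
  conv_lhs => rw [hspec, conj_aeval U _ h1 h2, aeval_diagonal]
  rw [Matrix.trace_mul_cycle, h2, Matrix.one_mul, Matrix.trace_diagonal]

lemma eigenvalue_exists_of_mulVec (A : Matrix V V ℝ) (hA : A.IsHermitian) (μ : ℝ)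
    (x : V → ℝ) (hx : x ≠ 0) (hAx : A *ᵥ x = μ • x) : ∃ i, hA.eigenvalues i = μ := by
  set U : Matrix V V ℝ := (hA.eigenvectorUnitary : Matrix V V ℝ) with hU
  have h1 : U * star U = 1 := (Matrix.mem_unitaryGroup_iff).mp hA.eigenvectorUnitary.prop
  have h2 : star U * U = 1 := (Matrix.mem_unitaryGroup_iff').mp hA.eigenvectorUnitary.prop
  have hspec : A = U * Matrix.diagonal hA.eigenvalues * star U := by
    have := hA.spectral_theorem
    simpa [RCLike.ofReal_real_eq_id] using this
  have hdet : (A - μ • (1 : Matrix V V ℝ)).det = 0 := by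
    rw [← Matrix.exists_mulVec_eq_zero_iff]
    refine ⟨x, hx, ?_⟩
    rw [Matrix.sub_mulVec, hAx, Matrix.smul_mulVec, Matrix.one_mulVec, sub_self]
  have hconj : A - μ • (1 : Matrix V V ℝ)
      = U * (Matrix.diagonal (fun i => hA.eigenvalues i - μ)) * star U := by
    have e1 : Matrix.diagonal (fun i => hA.eigenvalues i - μ)
        = Matrix.diagonal hA.eigenvalues - μ • 1 := by
      ext i j
      by_cases h : i = j <;> simp [Matrix.diagonal_apply, h, Matrix.one_apply]
    have e2 : U * (μ • (1 : Matrix V V ℝ)) * star U = μ • (1 : Matrix V V ℝ) := by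
      rw [Matrix.mul_smul, Matrix.mul_one, Matrix.smul_mul, h1]
    rw [e1, Matrix.mul_sub, Matrix.sub_mul, e2, ← hspec]
  rw [hconj, Matrix.det_mul, Matrix.det_mul] at hdet
  have hdetU : U.det * (star U).det = 1 := by
    rw [← Matrix.det_mul, h1, Matrix.det_one]
  have hzero : (Matrix.diagonal (fun i => hA.eigenvalues i - μ)).det = 0 := by
    by_contra hne
    apply hne
    nlinarith [hdet, hdetU]
  rw [Matrix.det_diagonal] at hzero
  obtain ⟨i, _, hi⟩ := Finset.prod_eq_zero_iff.mp hzero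
  exact ⟨i, by linarith [sub_eq_zero.mp hi]⟩
end Spectral

section GraphSpectral
open Matrix
variable {V : Type*} [Fintype V] [DecidableEq V] (G : SimpleGraph V) [DecidableRel G.Adj]
variable {k : ℕ}

lemma adjMatrix_mulVec_ones (hreg : G.IsRegularOfDegree k) :
    G.adjMatrix ℝ *ᵥ (fun _ => (1:ℝ)) = fun _ => (k : ℝ) := by
  funext v
  rw [SimpleGraph.adjMatrix_mulVec_apply]
  simp [hreg v]

lemma pow_mulVec_ones (hreg : G.IsRegularOfDegree k) (n : ℕ) :
    (G.adjMatrix ℝ) ^ n *ᵥ (fun _ => (1:ℝ)) = fun _ => (k : ℝ) ^ n := by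
  induction n with
  | zero => simp
  | succ n ih =>
    rw [pow_succ', ← Matrix.mulVec_mulVec, ih]
    have e : (fun _ : V => (k:ℝ)^n) = (k:ℝ)^n • (fun _ => (1:ℝ)) := by funext v; simp
    rw [e, Matrix.mulVec_smul, adjMatrix_mulVec_ones G hreg]
    funext v
    simp [pow_succ, mul_comm]

lemma aeval_mulVec_ones (hreg : G.IsRegularOfDegree k) (q : Polynomial ℝ) :
    (Polynomial.aeval (G.adjMatrix ℝ) q) *ᵥ (fun _ => (1:ℝ)) = fun _ => q.eval (k : ℝ) := by
  induction q using Polynomial.induction_on' with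
  | add p q hp hq =>
    rw [map_add, Matrix.add_mulVec, hp, hq]
    funext v
    simp [Polynomial.eval_add]
  | monomial n a =>
    rw [Polynomial.aeval_monomial, Algebra.algebraMap_eq_smul_one, Algebra.smul_mul_assoc,
      one_mul, Matrix.smul_mulVec, pow_mulVec_ones G hreg]
    funext v
    simp [Polynomial.eval_monomial]

lemma eigenvalues_le (hreg : G.IsRegularOfDegree k)
    (hA : (G.adjMatrix ℝ).IsHermitian) (i : V) : hA.eigenvalues i ≤ (k : ℝ) := by
  set x : V → ℝ := ⇑(hA.eigenvectorBasis i) with hx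
  have hAx : G.adjMatrix ℝ *ᵥ x = hA.eigenvalues i • x := hA.mulVec_eigenvectorBasis i
  obtain ⟨v, hvne⟩ : ∃ v, x v ≠ 0 := by
    by_contra hcon
    push_neg at hcon
    apply hA.eigenvectorBasis.orthonormal.ne_zero i
    ext v
    exact hcon v
  obtain ⟨v0, -, hv0⟩ := Finset.exists_max_image Finset.univ (fun v => |x v|) ⟨v, Finset.mem_univ v⟩
  have hv0pos : 0 < |x v0| := lt_of_lt_of_le (abs_pos.mpr hvne) (hv0 v (Finset.mem_univ v))
  have hmain : |hA.eigenvalues i| * |x v0| ≤ (k : ℝ) * |x v0| := by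
    have h1 : (G.adjMatrix ℝ *ᵥ x) v0 = ∑ u ∈ G.neighborFinset v0, x u :=
      SimpleGraph.adjMatrix_mulVec_apply _ _ _
    have h2 : |hA.eigenvalues i * x v0| = |(G.adjMatrix ℝ *ᵥ x) v0| := by
      rw [hAx]; simp
    rw [abs_mul] at h2
    rw [h2, h1]
    calc |∑ u ∈ G.neighborFinset v0, x u| ≤ ∑ u ∈ G.neighborFinset v0, |x u| :=
          Finset.abs_sum_le_sum_abs _ _
      _ ≤ ∑ u ∈ G.neighborFinset v0, |x v0| :=
          Finset.sum_le_sum (fun u _ => hv0 u (Finset.mem_univ u))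
      _ = (k : ℝ) * |x v0| := by
          rw [Finset.sum_const]
          have hcard : (G.neighborFinset v0).card = k := hreg v0
          rw [hcard]
          simp [nsmul_eq_mul]
  have habs : |hA.eigenvalues i| ≤ (k : ℝ) := le_of_mul_le_mul_right hmain hv0pos
  calc hA.eigenvalues i ≤ |hA.eigenvalues i| := le_abs_self _
    _ ≤ (k : ℝ) := habs

lemma exists_eigenvalue_k [Nonempty V] (hreg : G.IsRegularOfDegree k)
    (hA : (G.adjMatrix ℝ).IsHermitian) : ∃ i, hA.eigenvalues i = (k : ℝ) := by
  have h1 : G.adjMatrix ℝ *ᵥ (fun _ => (1:ℝ)) = (k:ℝ) • (fun _ => (1:ℝ)) := by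
    rw [adjMatrix_mulVec_ones G hreg]
    funext v
    simp
  have hne : (fun _ => (1:ℝ)) ≠ (0 : V → ℝ) := by
    intro h
    have := congrFun h (Classical.arbitrary V)
    norm_num at this
  exact eigenvalue_exists_of_mulVec _ hA _ _ hne h1

lemma trace_mul_nonneg (M N : Matrix V V ℝ) (hM : ∀ u v, 0 ≤ M u v) (hN : ∀ u v, 0 ≤ N u v) :
    0 ≤ (M * N).trace := by
  rw [Matrix.trace]
  apply Finset.sum_nonneg
  intro u _
  rw [Matrix.diag_apply, Matrix.mul_apply]
  exact Finset.sum_nonneg fun x _ => mul_nonneg (hM u x) (hN x u)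

lemma Fmat_nonneg (hreg : G.IsRegularOfDegree k) (j : ℕ) (u v : V) :
    0 ≤ Polynomial.aeval (G.adjMatrix ℝ) (Fpoly k j) u v := by
  rw [Ecast G hreg j]
  exact Nat.cast_nonneg _

lemma Fmat_rowsum (hreg : G.IsRegularOfDegree k) (j : ℕ) (u : V) :
    ∑ v, Polynomial.aeval (G.adjMatrix ℝ) (Fpoly k j) u v = CKNV.mval k j := by
  have h := congrFun (aeval_mulVec_ones G hreg (Fpoly k j)) u
  rw [Matrix.mulVec, dotProduct] at h
  simpa [CKNV.Fpoly_eval_k] using h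

lemma trace_FF_ge (hreg : G.IsRegularOfDegree k) (j : ℕ) :
    (Fintype.card V : ℝ) * CKNV.mval k j
      ≤ ((Polynomial.aeval (G.adjMatrix ℝ) (Fpoly k j))
          * (Polynomial.aeval (G.adjMatrix ℝ) (Fpoly k j))).trace := by
  set E := Polynomial.aeval (G.adjMatrix ℝ) (Fpoly k j) with hE
  have hsym : ∀ u v, E v u = E u v := by
    intro u v
    have h := aeval_transpose (G.adjMatrix ℝ) (G.isSymm_adjMatrix) (Fpoly k j)
    calc E v u = Eᵀ u v := rfl
      _ = E u v := by rw [← hE] at h; rw [h]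
  have hsq : ∀ u v, E u v ≤ E u v * E u v := by
    intro u v
    rw [hE, Ecast G hreg j]
    have hgen : ∀ a : ℕ, (a : ℝ) ≤ (a : ℝ) * (a : ℝ) := by
      intro a
      have : a ≤ a * a := by
        cases a with
        | zero => simp
        | succ n => exact Nat.le_mul_of_pos_left _ (Nat.succ_pos n)
      exact_mod_cast this
    exact hgen _
  calc (Fintype.card V : ℝ) * CKNV.mval k j
      = ∑ _u : V, CKNV.mval k j := by rw [Finset.sum_const, Finset.card_univ, nsmul_eq_mul]
    _ = ∑ u : V, ∑ v, E u v := by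
        apply Finset.sum_congr rfl
        intro u _
        rw [Fmat_rowsum G hreg j u]
    _ ≤ ∑ u : V, ∑ v, E u v * E v u := by
        apply Finset.sum_le_sum
        intro u _
        apply Finset.sum_le_sum
        intro v _
        rw [hsym u v]
        exact hsq u v
    _ = (E * E).trace := by
        rw [Matrix.trace]
        apply Finset.sum_congr rfl
        intro u _
        rw [Matrix.diag_apply, Matrix.mul_apply]

lemma list_map_sum_getD (g : ℝ → ℝ) (l : List ℝ) :
    (l.map g).sum = ∑ i ∈ Finset.range l.length, g (l.getD i 0) := by
  induction l with
  | nil => simp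
  | cons a t ih =>
    rw [List.map_cons, List.sum_cons, List.length_cons, Finset.sum_range_succ']
    simp only [List.getD_cons_succ, List.getD_cons_zero]
    rw [← ih]
    ring
end GraphSpectral

theorem stmt4 (k t : ℕ) (hk : 3 ≤ k) (ht : 2 ≤ t) (c : ℝ) (hc : 0 < c) (lam2 : ℝ)
    (hroot : (C (c - 1) * Gpoly k (t - 2) + Gpoly k (t - 1)).IsRoot lam2)
    (hmax : ∀ x : ℝ, (C (c - 1) * Gpoly k (t - 2) + Gpoly k (t - 1)).IsRoot x → x ≤ lam2)
    {V : Type*} [Fintype V] [DecidableEq V] (G : SimpleGraph V) [DecidableRel G.Adj]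
    (hconn : G.Connected) (hreg : G.IsRegularOfDegree k)
    (hlam : secondEigenvalue G ≤ lam2) :
    (Fintype.card V : ℝ) ≤ Mbound k t c := by
  classical
  obtain ⟨s, rfl⟩ : ∃ s, t = s + 2 := ⟨t - 2, by omega⟩
  have ht2 : s + 2 - 2 = s := by omega
  have ht1 : s + 2 - 1 = s + 1 := by omega
  rw [ht2, ht1] at hroot hmax
  have hA : (G.adjMatrix ℝ).IsHermitian := adjMatrix_isHermitian G
  set A := G.adjMatrix ℝ with hAdef
  set θ := lam2 with hθdef
  set n := Fintype.card V with hn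
  have hNE : Nonempty V := hconn.nonempty
  have hn2 : 2 ≤ n := by
    obtain ⟨v⟩ := hNE
    have hdeg : 0 < G.degree v := by rw [hreg v]; omega
    obtain ⟨u, hu⟩ := (G.degree_pos_iff_exists_adj v).mp hdeg
    have hne : u ≠ v := fun h => G.irrefl (h ▸ hu)
    exact Fintype.one_lt_card_iff.mpr ⟨u, v, hne⟩
  -- polynomial side
  have hpw : C (c-1) * Gpoly k s + Gpoly k (s+1) = CKNV.wseq k c (s+1) := CKNV.wG k c s
  have hrootw : (CKNV.wseq k c (s+1)).eval θ = 0 := by rw [← hpw]; exact hroot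
  have hmaxw : ∀ x, (CKNV.wseq k c (s+1)).eval x = 0 → x ≤ θ := fun x hx =>
    hmax x (show IsRoot _ x by rw [hpw]; exact hx)
  have hwpos := CKNV.wpos_at_root hk hc hrootw hmaxw
  have hupos : ∀ m, m ≤ s → 0 ≤ CKNV.useq k c θ m := by
    intro m
    induction m using Nat.strong_induction_on with
    | _ m ih =>
      match m with
      | 0 => intro _; norm_num [CKNV.useq]
      | 1 =>
        intro h1
        have := hwpos 1 le_rfl h1
        simp only [CKNV.wseq, eval_add, eval_X, eval_C] at this
        show (0:ℝ) ≤ θ + c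
        linarith
      | m + 2 =>
        intro h2
        have h1 : 0 ≤ CKNV.useq k c θ m := ih m (by omega) (by omega)
        have h0 : 0 < (CKNV.wseq k c (m+2)).eval θ := hwpos (m+2) (by omega) h2
        show 0 ≤ (CKNV.wseq k c (m+2)).eval θ + CKNV.useq k c θ m
        linarith
  set r := CKNV.Rpoly k c θ s with hrdef
  set p := C (c-1) * Gpoly k s + Gpoly k (s+1) with hpdef
  have hdiv : (X - C θ) * r = p := by
    rw [hrdef, CKNV.Rdiv k c θ s, hrootw, map_zero, sub_zero, hpw]
  -- evaluations at k
  have hGeval : ∀ i, (Gpoly k i).eval (k:ℝ) = ∑ j ∈ Finset.range (i+1), CKNV.mval k j := by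
    intro i
    rw [Gpoly, eval_finset_sum]
    exact Finset.sum_congr rfl fun j _ => CKNV.Fpoly_eval_k k j
  have hGs : (Gpoly k s).eval (k:ℝ) = 1 + ∑ i ∈ Finset.range s, (k:ℝ) * ((k:ℝ)-1)^i := by
    rw [hGeval, Finset.sum_range_succ']
    simp only [CKNV.mval]
    ring
  have hpk : p.eval (k:ℝ) = c * Mbound k (s+2) c := by
    have hM : Mbound k (s+2) c = (1 + ∑ i ∈ Finset.range s, (k:ℝ)*((k:ℝ)-1)^i)
        + (k:ℝ)*((k:ℝ)-1)^s / c := by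
      rw [Mbound, ht2]
    have hGs1 : (Gpoly k (s+1)).eval (k:ℝ)
        = (Gpoly k s).eval (k:ℝ) + (k:ℝ)*((k:ℝ)-1)^s := by
      rw [CKNV.Gpoly_succ, eval_add, CKNV.Fpoly_eval_k]
      rfl
    rw [hpdef, eval_add, eval_mul, eval_C, hGs1, hGs, hM]
    field_simp
    ring
  have hrk : r.eval (k:ℝ) = ∑ j ∈ Finset.range (s+1), CKNV.useq k c θ (s-j) * CKNV.mval k j := by
    rw [hrdef, CKNV.Rpoly, eval_finset_sum]
    exact Finset.sum_congr rfl fun j _ => by rw [eval_mul, eval_C, CKNV.Fpoly_eval_k]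
  have hrk_pos : 0 < r.eval (k:ℝ) := by
    rw [hrk, Finset.sum_range_succ]
    have hlast : CKNV.useq k c θ (s - s) * CKNV.mval k s = CKNV.mval k s := by
      rw [Nat.sub_self]
      show CKNV.useq k c θ 0 * _ = _
      norm_num [CKNV.useq]
    have hrest : 0 ≤ ∑ j ∈ Finset.range s, CKNV.useq k c θ (s-j) * CKNV.mval k j :=
      Finset.sum_nonneg fun j _ =>
        mul_nonneg (hupos _ (by omega)) (CKNV.mval_nonneg hk _)
    rw [hlast]
    linarith [CKNV.mval_pos hk s]
  -- trace lower bound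
  set fpol := p * r with hfdef
  have hpform : p = C c * Gpoly k s + Fpoly k (s+1) := by
    rw [hpdef, CKNV.Gpoly_succ]
    simp only [map_sub, map_one]
    ring
  have hGm : Polynomial.aeval A (Gpoly k s)
      = ∑ i ∈ Finset.range (s+1), Polynomial.aeval A (Fpoly k i) := by
    rw [Gpoly, map_sum]
  have hRm : Polynomial.aeval A r
      = ∑ j ∈ Finset.range (s+1), CKNV.useq k c θ (s-j) • Polynomial.aeval A (Fpoly k j) := by
    rw [hrdef, CKNV.Rpoly, map_sum]
    apply Finset.sum_congr rfl
    intro j _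
    rw [map_mul, aeval_C, Algebra.algebraMap_eq_smul_one, Algebra.smul_mul_assoc, one_mul]
  have hEnn : ∀ i u v, (0:ℝ) ≤ Polynomial.aeval A (Fpoly k i) u v := fun i => Fmat_nonneg G hreg i
  have hRnn : ∀ u v, (0:ℝ) ≤ (Polynomial.aeval A r) u v := by
    intro u v
    rw [hRm, Matrix.sum_apply]
    apply Finset.sum_nonneg
    intro j _
    rw [Matrix.smul_apply, smul_eq_mul]
    exact mul_nonneg (hupos _ (by omega)) (hEnn j u v)
  have htr1 : 0 ≤ (Polynomial.aeval A (Fpoly k (s+1)) * Polynomial.aeval A r).trace :=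
    trace_mul_nonneg _ _ (hEnn (s+1)) hRnn
  have htr2 : (n:ℝ) * (r.eval (k:ℝ))
      ≤ (Polynomial.aeval A (Gpoly k s) * Polynomial.aeval A r).trace := by
    rw [hGm, hRm, Finset.sum_mul, Matrix.trace_sum]
    have hterm : ∀ i ∈ Finset.range (s+1),
        (Polynomial.aeval A (Fpoly k i)
          * ∑ j ∈ Finset.range (s+1), CKNV.useq k c θ (s-j) • Polynomial.aeval A (Fpoly k j)).trace
        = ∑ j ∈ Finset.range (s+1), CKNV.useq k c θ (s-j)
            * (Polynomial.aeval A (Fpoly k i) * Polynomial.aeval A (Fpoly k j)).trace := by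
      intro i _
      rw [Finset.mul_sum, Matrix.trace_sum]
      apply Finset.sum_congr rfl
      intro j _
      rw [Matrix.mul_smul, Matrix.trace_smul, smul_eq_mul]
    rw [Finset.sum_congr rfl hterm]
    have hdiag : ∀ i ∈ Finset.range (s+1),
        CKNV.useq k c θ (s-i) * ((n:ℝ) * CKNV.mval k i)
        ≤ ∑ j ∈ Finset.range (s+1), CKNV.useq k c θ (s-j)
            * (Polynomial.aeval A (Fpoly k i) * Polynomial.aeval A (Fpoly k j)).trace := by
      intro i hi
      have h1 : ∀ j ∈ Finset.range (s+1), 0 ≤ CKNV.useq k c θ (s-j)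
          * (Polynomial.aeval A (Fpoly k i) * Polynomial.aeval A (Fpoly k j)).trace :=
        fun j _ => mul_nonneg (hupos _ (by omega))
          (trace_mul_nonneg _ _ (hEnn i) (hEnn j))
      have h2 : CKNV.useq k c θ (s-i) * ((n:ℝ) * CKNV.mval k i)
          ≤ CKNV.useq k c θ (s-i)
            * (Polynomial.aeval A (Fpoly k i) * Polynomial.aeval A (Fpoly k i)).trace :=
        mul_le_mul_of_nonneg_left (by rw [hn]; exact trace_FF_ge G hreg i) (hupos _ (by omega))
      exact le_trans h2 (Finset.single_le_sum h1 hi)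
    calc (n:ℝ) * r.eval (k:ℝ)
        = ∑ i ∈ Finset.range (s+1), CKNV.useq k c θ (s-i) * ((n:ℝ) * CKNV.mval k i) := by
          rw [hrk, Finset.mul_sum]
          exact Finset.sum_congr rfl fun i _ => by ring
      _ ≤ _ := Finset.sum_le_sum hdiag
  have hlow : (n:ℝ) * (c * r.eval (k:ℝ)) ≤ (Polynomial.aeval A fpol).trace := by
    have haf : Polynomial.aeval A fpol = Polynomial.aeval A p * Polynomial.aeval A r :=
      map_mul _ _ _
    have hap : Polynomial.aeval A p
        = c • Polynomial.aeval A (Gpoly k s) + Polynomial.aeval A (Fpoly k (s+1)) := by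
      rw [hpform, map_add, map_mul, aeval_C, Algebra.algebraMap_eq_smul_one,
        Algebra.smul_mul_assoc, one_mul]
    rw [haf, hap, Matrix.add_mul, Matrix.smul_mul, Matrix.trace_add, Matrix.trace_smul,
      smul_eq_mul]
    have := mul_le_mul_of_nonneg_left htr2 hc.le
    linarith
  -- trace upper bound via eigenvalues
  have hfneg : ∀ x : ℝ, x ≤ θ → fpol.eval x ≤ 0 := by
    intro x hx
    have hev : fpol.eval x = (x - θ) * (r.eval x * r.eval x) := by
      have hpx : p.eval x = (x - θ) * r.eval x := by
        rw [← hdiv, eval_mul, eval_sub, eval_X, eval_C]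
      rw [hfdef, eval_mul, hpx]
      ring
    rw [hev]
    apply mul_nonpos_of_nonpos_of_nonneg
    · linarith
    · exact mul_self_nonneg _
  set l : List ℝ := (eigMultiset G).sort (· ≤ ·) with hldef
  have hlen : l.length = n := by
    rw [hldef, Multiset.length_sort, eigMultiset, Multiset.card_map]
    simp [hn]
  have hsorted : l.Pairwise (· ≤ ·) := Multiset.pairwise_sort _ _
  have hmem_eig : ∀ x ∈ l, ∃ i, hA.eigenvalues i = x := by
    intro x hx
    have hx2 : x ∈ eigMultiset G := by
      rw [hldef, Multiset.mem_sort] at hx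
      exact hx
    rw [eigMultiset, Multiset.mem_map] at hx2
    obtain ⟨i, _, hi⟩ := hx2
    exact ⟨i, hi⟩
  have hgetD_le_k : ∀ i, i < n → l.getD i 0 ≤ (k:ℝ) := by
    intro i hi
    have hmem : l.getD i 0 ∈ l := by
      rw [List.getD_eq_getElem l 0 (by omega : i < l.length)]
      exact List.getElem_mem _
    obtain ⟨j, hj⟩ := hmem_eig _ hmem
    rw [← hj]
    exact eigenvalues_le G hreg hA j
  have hmono : ∀ i j : ℕ, i ≤ j → (hj : j < l.length) → l.getD i 0 ≤ l.getD j 0 := by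
    intro i j hij hj
    have hi : i < l.length := by omega
    rw [List.getD_eq_getElem l 0 hi, List.getD_eq_getElem l 0 hj]
    have := hsorted.rel_get_of_le (a := ⟨i, hi⟩) (b := ⟨j, hj⟩) (by simpa using hij)
    simpa using this
  have htop : l.getD (n-1) 0 = (k:ℝ) := by
    obtain ⟨i0, hi0⟩ := exists_eigenvalue_k G hreg hA
    have hkmem : (k:ℝ) ∈ l := by
      rw [hldef, Multiset.mem_sort, eigMultiset, Multiset.mem_map]
      exact ⟨i0, by simp, hi0⟩
    obtain ⟨j, hjlt, hj⟩ := List.mem_iff_getElem.mp hkmem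
    have h1 : (k:ℝ) ≤ l.getD (n-1) 0 := by
      rw [← hj, ← List.getD_eq_getElem l 0 hjlt]
      exact hmono j (n-1) (by omega) (by omega)
    have h2 := hgetD_le_k (n-1) (by omega)
    linarith
  have hsec : ∀ i, i ≤ n - 2 → l.getD i 0 ≤ θ := by
    intro i hi
    have h1 : l.getD i 0 ≤ l.getD (n-2) 0 := hmono i (n-2) hi (by omega)
    have h2 : l.getD (n-2) 0 = secondEigenvalue G := by
      rw [secondEigenvalue, ← hldef, hlen]
    rw [hθdef]
    calc l.getD i 0 ≤ l.getD (n-2) 0 := h1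
      _ = secondEigenvalue G := h2
      _ ≤ lam2 := hlam
  have hup : (Polynomial.aeval A fpol).trace ≤ fpol.eval (k:ℝ) := by
    rw [hAdef, trace_aeval _ hA fpol]
    have hsum : ∑ i, fpol.eval (hA.eigenvalues i)
        = ∑ i ∈ Finset.range l.length, fpol.eval (l.getD i 0) := by
      rw [← list_map_sum_getD (fun x => eval x fpol) l]
      have h1 : ∑ i, fpol.eval (hA.eigenvalues i)
          = ((eigMultiset G).map (fun x => fpol.eval x)).sum := by
        rw [eigMultiset, Multiset.map_map]
        rfl
      rw [h1, ← Multiset.sort_eq (eigMultiset G) (· ≤ ·), ← hldef, Multiset.map_coe,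
        Multiset.sum_coe]
    rw [hsum, hlen]
    have h0 : n = (n-1)+1 := by omega
    have hsplit2 : ∑ i ∈ Finset.range n, fpol.eval (l.getD i 0)
        = (∑ i ∈ Finset.range (n-1), fpol.eval (l.getD i 0)) + fpol.eval (l.getD (n-1) 0) := by
      calc ∑ i ∈ Finset.range n, fpol.eval (l.getD i 0)
          = ∑ i ∈ Finset.range ((n-1)+1), fpol.eval (l.getD i 0) := by rw [← h0]
        _ = _ := Finset.sum_range_succ _ _
    rw [hsplit2]
    have hbound : ∑ i ∈ Finset.range (n-1), fpol.eval (l.getD i 0) ≤ 0 := by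
      apply Finset.sum_nonpos
      intro i hi
      rw [Finset.mem_range] at hi
      exact hfneg _ (hsec i (by omega))
    rw [htop]
    linarith
  -- combine
  have hfk : fpol.eval (k:ℝ) = p.eval (k:ℝ) * r.eval (k:ℝ) := by rw [hfdef, eval_mul]
  have hchain : (n:ℝ) * (c * r.eval (k:ℝ)) ≤ c * Mbound k (s+2) c * r.eval (k:ℝ) := by
    calc (n:ℝ) * (c * r.eval (k:ℝ)) ≤ (Polynomial.aeval A fpol).trace := hlow
      _ ≤ fpol.eval (k:ℝ) := hup
      _ = p.eval (k:ℝ) * r.eval (k:ℝ) := hfk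
      _ = c * Mbound k (s+2) c * r.eval (k:ℝ) := by rw [hpk]
  have h1 : (n:ℝ) * c ≤ c * Mbound k (s+2) c := by
    have h1' : ((n:ℝ) * c) * r.eval (k:ℝ) ≤ (c * Mbound k (s+2) c) * r.eval (k:ℝ) := by
      calc ((n:ℝ) * c) * r.eval (k:ℝ) = (n:ℝ) * (c * r.eval (k:ℝ)) := by ring
        _ ≤ c * Mbound k (s+2) c * r.eval (k:ℝ) := hchain
    exact le_of_mul_le_mul_right h1' hrk_pos
  have h2 : c * (n:ℝ) ≤ c * Mbound k (s+2) c := by linarith [h1]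
  exact (mul_le_mul_iff_right₀ hc).mp h2
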